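/- Let m = qn + r with q ≥ 1 and r nonnegative integers, n a positive integer, and n/3 ≤ r < n/2. Then L(m,n) = m + r = qn + 2r. -/

import Mathlib

/-- D(m,n): n×n matrices with nonnegative integer entries, all row and column sums equal m. -/
def IsDSM (m n : ℕ) (A : Fin n → Fin n → ℕ) : Prop :=
  (∀ i, ∑ j, A i j = m) ∧ (∀ j, ∑ i, A i j = m)

/-- tdet A: maximum of a transversal sum over all permutations. -/
def tdet {n : ℕ} (A : Fin n → Fin n → ℕ) : ℕ :=
  Finset.univ.sup fun σ : Equiv.Perm (Fin n) => ∑ i, A i (σ i)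

namespace LThirdHalf

/-- The witness matrix entry. -/
def entry (q r s i j : ℕ) : ℕ :=
  if i < r then
    (if j < r then (if (j + r - i) % r < s then q - 1 else q) else q + 1)
  else (if j < r then q + 1 else q)

lemma mod_add_cancel {r a b x : ℕ} (hab : a + b = r) (hx : x < r) :
    ((x + a) % r + b) % r = x := by
  rcases Nat.lt_or_ge (x + a) r with h | h
  · rw [Nat.mod_eq_of_lt h]
    have h2 : x + a + b = x + r := by omega
    rw [h2, Nat.add_mod_right, Nat.mod_eq_of_lt hx]
  · have h1 : (x + a) % r = x + a - r := by
      rw [Nat.mod_eq_sub_mod h, Nat.mod_eq_of_lt (by omega)]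
    have h2 : x + a - r + b = x := by omega
    rw [h1, h2, Nat.mod_eq_of_lt hx]

lemma mod_sub_invol {r c x : ℕ} (hx : x < r) (hc1 : r ≤ c) (hc2 : c < 2 * r) :
    (c - (c - x) % r) % r = x := by
  rcases Nat.lt_or_ge (c - x) r with h | h
  · rw [Nat.mod_eq_of_lt h]
    have h2 : c - (c - x) = x := by omega
    rw [h2, Nat.mod_eq_of_lt hx]
  · have h1 : (c - x) % r = c - x - r := by
      rw [Nat.mod_eq_sub_mod h, Nat.mod_eq_of_lt (by omega)]
    have h2 : c - (c - x - r) = x + r := by omega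
    rw [h1, h2, Nat.add_mod_right, Nat.mod_eq_of_lt hx]

lemma count1 (r s i : ℕ) (hs : s ≤ r) (hi : i < r) :
    ((Finset.range r).filter (fun j => (j + r - i) % r < s)).card = s := by
  have hr : 0 < r := by omega
  have hkey : ((Finset.range r).filter (fun j => (j + r - i) % r < s)).card
      = (Finset.range s).card := by
    apply Finset.card_bij' (fun j _ => (j + r - i) % r) (fun k _ => (k + i) % r)
    · intro a ha
      rw [Finset.mem_filter] at ha
      exact Finset.mem_range.mpr ha.2
    · intro k hk
      rw [Finset.mem_range] at hk
      rw [Finset.mem_filter, Finset.mem_range]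
      have hkr : k < r := lt_of_lt_of_le hk hs
      have key : ((k + i) % r + r - i) % r = k := by
        have h3 : (k + i) % r + r - i = (k + i) % r + (r - i) := by omega
        rw [h3]
        exact mod_add_cancel (by omega) hkr
      exact ⟨Nat.mod_lt _ hr, by rw [key]; exact hk⟩
    · intro a ha
      rw [Finset.mem_filter, Finset.mem_range] at ha
      have h3 : a + r - i = a + (r - i) := by omega
      rw [h3]
      exact mod_add_cancel (by omega) ha.1
    · intro k hk
      rw [Finset.mem_range] at hk
      have hkr : k < r := lt_of_lt_of_le hk hs
      have h3 : (k + i) % r + r - i = (k + i) % r + (r - i) := by omega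
      rw [h3]
      exact mod_add_cancel (by omega) hkr
  rw [Finset.card_range] at hkey
  exact hkey

lemma count2 (r s c : ℕ) (hs : s ≤ r) (hc1 : r ≤ c) (hc2 : c < 2 * r) :
    ((Finset.range r).filter (fun i => (c - i) % r < s)).card = s := by
  have hr : 0 < r := by omega
  have hkey : ((Finset.range r).filter (fun i => (c - i) % r < s)).card
      = (Finset.range s).card := by
    apply Finset.card_bij' (fun j _ => (c - j) % r) (fun k _ => (c - k) % r)
    · intro a ha
      rw [Finset.mem_filter] at ha
      exact Finset.mem_range.mpr ha.2
    · intro k hk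
      rw [Finset.mem_range] at hk
      have hkr : k < r := lt_of_lt_of_le hk hs
      rw [Finset.mem_filter, Finset.mem_range]
      refine ⟨Nat.mod_lt _ hr, ?_⟩
      rw [mod_sub_invol hkr hc1 hc2]
      exact hk
    · intro a ha
      rw [Finset.mem_filter, Finset.mem_range] at ha
      exact mod_sub_invol ha.1 hc1 hc2
    · intro k hk
      rw [Finset.mem_range] at hk
      exact mod_sub_invol (lt_of_lt_of_le hk hs) hc1 hc2
  rw [Finset.card_range] at hkey
  exact hkey

lemma sum_split (n r : ℕ) (hrn : r ≤ n) (f : ℕ → ℕ) :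
    ∑ j ∈ Finset.range n, f j
      = ∑ j ∈ Finset.range r, f j + ∑ j ∈ Finset.Ico r n, f j := by
  rw [Finset.range_eq_Ico, Finset.range_eq_Ico]
  exact (Finset.sum_Ico_consecutive f (Nat.zero_le r) hrn).symm

lemma arith1 (q r s n : ℕ) (hq : 1 ≤ q) (hs1 : 1 ≤ s) (hsr : s ≤ r) (hn : n = 2 * r + s) :
    s * (q - 1) + (r - s) * q + (n - r) * (q + 1) = q * n + r := by
  obtain ⟨q', rfl⟩ := Nat.exists_eq_add_of_le hq
  obtain ⟨t, rfl⟩ := Nat.exists_eq_add_of_le hsr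
  subst hn
  have e1 : 1 + q' - 1 = q' := by omega
  have e2 : s + t - s = t := by omega
  have e3 : 2 * (s + t) + s - (s + t) = 2 * s + t := by omega
  rw [e1, e2, e3]
  ring

lemma arith2 (q r s n : ℕ) (hsr : s ≤ r) (hn : n = 2 * r + s) :
    r * (q + 1) + (n - r) * q = q * n + r := by
  have e3 : n - r = r + s := by omega
  rw [e3]
  subst hn
  ring

lemma sum_band (r s c q : ℕ) (hs : s ≤ r)
    (hcard : ((Finset.range r).filter (fun j => (c - j) % r < s)).card = s) :
    ∑ j ∈ Finset.range r, (if (c - j) % r < s then q - 1 else q)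
      = s * (q - 1) + (r - s) * q := by
  rw [Finset.sum_ite, Finset.sum_const, Finset.sum_const, smul_eq_mul, smul_eq_mul]
  have hneg : ((Finset.range r).filter (fun j => ¬ (c - j) % r < s)).card = r - s := by
    have h := Finset.card_filter_add_card_filter_not
      (s := Finset.range r) (p := fun j => (c - j) % r < s)
    rw [Finset.card_range, hcard] at h
    omega
  rw [hcard, hneg]

lemma entry_row_sum (q r s n i : ℕ) (hq : 1 ≤ q) (hs1 : 1 ≤ s) (hsr : s ≤ r)
    (hn : n = 2 * r + s) :
    ∑ j ∈ Finset.range n, entry q r s i j = q * n + r := by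
  have hrn : r ≤ n := by omega
  rw [sum_split n r hrn]
  by_cases hi : i < r
  · have h1 : ∑ j ∈ Finset.range r, entry q r s i j = s * (q - 1) + (r - s) * q := by
      have hcong : ∀ j ∈ Finset.range r,
          entry q r s i j = if (j + r - i) % r < s then q - 1 else q := by
        intro j hj
        rw [Finset.mem_range] at hj
        simp [entry, hi, hj]
      rw [Finset.sum_congr rfl hcong, Finset.sum_ite, Finset.sum_const, Finset.sum_const,
        smul_eq_mul, smul_eq_mul]
      have hcard := count1 r s i hsr hi
      have hneg : ((Finset.range r).filter (fun j => ¬ (j + r - i) % r < s)).card = r - s := by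
        have h := Finset.card_filter_add_card_filter_not
          (s := Finset.range r) (p := fun j => (j + r - i) % r < s)
        rw [Finset.card_range, hcard] at h
        omega
      rw [hcard, hneg]
    have h2 : ∑ j ∈ Finset.Ico r n, entry q r s i j = (n - r) * (q + 1) := by
      have hcong : ∀ j ∈ Finset.Ico r n, entry q r s i j = q + 1 := by
        intro j hj
        rw [Finset.mem_Ico] at hj
        simp [entry, hi, Nat.not_lt.mpr hj.1]
      rw [Finset.sum_congr rfl hcong, Finset.sum_const, smul_eq_mul, Nat.card_Ico]
    rw [h1, h2]
    exact arith1 q r s n hq hs1 hsr hn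
  · have h1 : ∑ j ∈ Finset.range r, entry q r s i j = r * (q + 1) := by
      have hcong : ∀ j ∈ Finset.range r, entry q r s i j = q + 1 := by
        intro j hj
        rw [Finset.mem_range] at hj
        simp [entry, hi, hj]
      rw [Finset.sum_congr rfl hcong, Finset.sum_const, smul_eq_mul, Finset.card_range]
    have h2 : ∑ j ∈ Finset.Ico r n, entry q r s i j = (n - r) * q := by
      have hcong : ∀ j ∈ Finset.Ico r n, entry q r s i j = q := by
        intro j hj
        rw [Finset.mem_Ico] at hj
        simp [entry, hi, Nat.not_lt.mpr hj.1]
      rw [Finset.sum_congr rfl hcong, Finset.sum_const, smul_eq_mul, Nat.card_Ico]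
    rw [h1, h2]
    exact arith2 q r s n hsr hn

lemma entry_col_sum (q r s n j : ℕ) (hq : 1 ≤ q) (hs1 : 1 ≤ s) (hsr : s ≤ r)
    (hn : n = 2 * r + s) :
    ∑ i ∈ Finset.range n, entry q r s i j = q * n + r := by
  have hrn : r ≤ n := by omega
  rw [sum_split n r hrn]
  by_cases hj : j < r
  · have h1 : ∑ i ∈ Finset.range r, entry q r s i j = s * (q - 1) + (r - s) * q := by
      have hcong : ∀ i ∈ Finset.range r,
          entry q r s i j = if (j + r - i) % r < s then q - 1 else q := by
        intro i hi
        rw [Finset.mem_range] at hi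
        simp [entry, hi, hj]
      rw [Finset.sum_congr rfl hcong]
      exact sum_band r s (j + r) q hsr
        (count2 r s (j + r) hsr (by omega) (by omega))
    have h2 : ∑ i ∈ Finset.Ico r n, entry q r s i j = (n - r) * (q + 1) := by
      have hcong : ∀ i ∈ Finset.Ico r n, entry q r s i j = q + 1 := by
        intro i hi
        rw [Finset.mem_Ico] at hi
        simp [entry, hj, Nat.not_lt.mpr hi.1]
      rw [Finset.sum_congr rfl hcong, Finset.sum_const, smul_eq_mul, Nat.card_Ico]
    rw [h1, h2]
    exact arith1 q r s n hq hs1 hsr hn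
  · have h1 : ∑ i ∈ Finset.range r, entry q r s i j = r * (q + 1) := by
      have hcong : ∀ i ∈ Finset.range r, entry q r s i j = q + 1 := by
        intro i hi
        rw [Finset.mem_range] at hi
        simp [entry, hi, hj]
      rw [Finset.sum_congr rfl hcong, Finset.sum_const, smul_eq_mul, Finset.card_range]
    have h2 : ∑ i ∈ Finset.Ico r n, entry q r s i j = (n - r) * q := by
      have hcong : ∀ i ∈ Finset.Ico r n, entry q r s i j = q := by
        intro i hi
        rw [Finset.mem_Ico] at hi
        simp [entry, hj, Nat.not_lt.mpr hi.1]
      rw [Finset.sum_congr rfl hcong, Finset.sum_const, smul_eq_mul, Nat.card_Ico]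
    rw [h1, h2]
    exact arith2 q r s n hsr hn

lemma entry_le (q r s i j : ℕ) (hq : 1 ≤ q) :
    entry q r s i j ≤ (if i < r then q + 1 else q) + (if j < r then 1 else 0) := by
  unfold entry
  split_ifs <;> omega

lemma sum_ite_range (n r a b : ℕ) (h : r ≤ n) :
    ∑ j ∈ Finset.range n, (if j < r then a else b) = r * a + (n - r) * b := by
  rw [sum_split n r h]
  have h1 : ∑ j ∈ Finset.range r, (if j < r then a else b) = r * a := by
    rw [Finset.sum_congr rfl (fun j hj => if_pos (Finset.mem_range.mp hj)),
      Finset.sum_const, smul_eq_mul, Finset.card_range]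
  have h2 : ∑ j ∈ Finset.Ico r n, (if j < r then a else b) = (n - r) * b := by
    rw [Finset.sum_congr rfl
        (fun j hj => if_neg (Nat.not_lt.mpr (Finset.mem_Ico.mp hj).1)),
      Finset.sum_const, smul_eq_mul, Nat.card_Ico]
  rw [h1, h2]

end LThirdHalf

/-- If m = qn + r with q ≥ 1 and n/3 ≤ r < n/2, then L(m,n) = m + r = qn + 2r. -/
theorem L_eq_third_half (m n q r : ℕ) (hn : 0 < n) (hq : 1 ≤ q)
    (hm : m = q * n + r) (hr1 : n ≤ 3 * r) (hr2 : 2 * r < n) :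
    (∀ A : Fin n → Fin n → ℕ, IsDSM m n A → q * n + 2 * r ≤ tdet A) ∧
    (∃ A : Fin n → Fin n → ℕ, IsDSM m n A ∧ tdet A = q * n + 2 * r) := by
  subst hm
  -- Part 1: lower bound
  have hLB : ∀ A : Fin n → Fin n → ℕ, IsDSM (q * n + r) n A → q * n + 2 * r ≤ tdet A := by
    intro A hA
    obtain ⟨σ, -, hσ⟩ := Finset.exists_mem_eq_sup (Finset.univ : Finset (Equiv.Perm (Fin n)))
      Finset.univ_nonempty (fun σ : Equiv.Perm (Fin n) => ∑ i, A i (σ i))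
    have htdet : tdet A = ∑ i, A i (σ i) := hσ
    have hmax : ∀ τ : Equiv.Perm (Fin n), ∑ i, A i (τ i) ≤ ∑ i, A i (σ i) := by
      intro τ
      rw [← htdet]
      show ∑ i, A i (τ i) ≤ Finset.univ.sup fun σ : Equiv.Perm (Fin n) => ∑ i, A i (σ i)
      exact Finset.le_sup (f := fun σ : Equiv.Perm (Fin n) => ∑ i, A i (σ i))
        (Finset.mem_univ τ)
    have key : ∀ i j : Fin n, A i (σ j) + A j (σ i) ≤ A i (σ i) + A j (σ j) := by
      intro i j
      rcases eq_or_ne i j with rfl | hij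
      · exact le_rfl
      · have hmemj : j ∈ Finset.univ.erase i :=
          Finset.mem_erase.mpr ⟨hij.symm, Finset.mem_univ j⟩
        have split : ∀ g : Fin n → ℕ, ∑ k, g k
            = g i + (g j + ∑ k ∈ (Finset.univ.erase i).erase j, g k) := by
          intro g
          rw [Finset.add_sum_erase _ g hmemj, Finset.add_sum_erase _ g (Finset.mem_univ i)]
        have h1 := hmax ((Equiv.swap i j).trans σ)
        have e1 : ∑ k, A k (((Equiv.swap i j).trans σ) k)
            = A i (σ j) + (A j (σ i) + ∑ k ∈ (Finset.univ.erase i).erase j, A k (σ k)) := by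
          rw [split (fun k => A k (((Equiv.swap i j).trans σ) k))]
          have f1 : ((Equiv.swap i j).trans σ) i = σ j := by
            simp [Equiv.trans_apply, Equiv.swap_apply_left]
          have f2 : ((Equiv.swap i j).trans σ) j = σ i := by
            simp [Equiv.trans_apply, Equiv.swap_apply_right]
          rw [f1, f2]
          congr 2
          apply Finset.sum_congr rfl
          intro k hk
          rw [Finset.mem_erase] at hk
          have hk2 := Finset.mem_erase.mp hk.2
          simp [Equiv.trans_apply, Equiv.swap_apply_of_ne_of_ne hk2.1 hk.1]
        have e2 := split (fun k => A k (σ k))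
        rw [e1, e2] at h1
        omega
    have key2 : ∀ i : Fin n, 2 * (q * n + r) ≤ n * A i (σ i) + ∑ k, A k (σ k) := by
      intro i
      have hs := Finset.sum_le_sum (fun j (_ : j ∈ Finset.univ) => key i j)
      rw [Finset.sum_add_distrib, Finset.sum_add_distrib] at hs
      rw [Equiv.sum_comp σ (fun c => A i c), hA.1 i, hA.2 (σ i)] at hs
      rw [Finset.sum_const, Finset.card_univ, Fintype.card_fin, smul_eq_mul] at hs
      omega
    by_contra hcon
    push_neg at hcon
    rw [htdet] at hcon
    have hd : ∀ i : Fin n, q + 1 ≤ A i (σ i) := by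
      intro i
      have hk := key2 i
      have h5 : q * n < n * A i (σ i) := by omega
      rw [mul_comm q n] at h5
      exact Nat.lt_of_mul_lt_mul_left h5
    have hsum : ∑ i : Fin n, (q + 1) ≤ ∑ i, A i (σ i) :=
      Finset.sum_le_sum (fun i _ => hd i)
    rw [Finset.sum_const, Finset.card_univ, Fintype.card_fin, smul_eq_mul] at hsum
    have hexp : n * (q + 1) = q * n + n := by ring
    omega
  refine ⟨hLB, ?_⟩
  -- Part 2: the witness matrix
  obtain ⟨s, hn', hs1, hsr⟩ : ∃ s, n = 2 * r + s ∧ 1 ≤ s ∧ s ≤ r :=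
    ⟨n - 2 * r, by omega, by omega, by omega⟩
  set A : Fin n → Fin n → ℕ := fun i j => LThirdHalf.entry q r s i.val j.val with hA
  have hDSM : IsDSM (q * n + r) n A := by
    constructor
    · intro i
      rw [show (∑ j, A i j) = ∑ j ∈ Finset.range n, LThirdHalf.entry q r s i.val j from
        Fin.sum_univ_eq_sum_range (fun j => LThirdHalf.entry q r s i.val j) n]
      exact LThirdHalf.entry_row_sum q r s n i.val hq hs1 hsr hn'
    · intro j
      rw [show (∑ i, A i j) = ∑ i ∈ Finset.range n, LThirdHalf.entry q r s i j.val from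
        Fin.sum_univ_eq_sum_range (fun i => LThirdHalf.entry q r s i j.val) n]
      exact LThirdHalf.entry_col_sum q r s n j.val hq hs1 hsr hn'
  refine ⟨A, hDSM, le_antisymm ?_ (hLB A hDSM)⟩
  show (Finset.univ.sup fun σ : Equiv.Perm (Fin n) => ∑ i, A i (σ i)) ≤ q * n + 2 * r
  apply Finset.sup_le
  intro σ _
  have hb : ∀ i : Fin n, A i (σ i)
      ≤ (if i.val < r then q + 1 else q) + (if (σ i).val < r then 1 else 0) :=
    fun i => LThirdHalf.entry_le q r s i.val (σ i).val hq
  calc ∑ i, A i (σ i)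
      ≤ ∑ i : Fin n, ((if i.val < r then q + 1 else q) + (if (σ i).val < r then 1 else 0)) :=
        Finset.sum_le_sum (fun i _ => hb i)
    _ = (∑ i : Fin n, (if i.val < r then q + 1 else q))
        + ∑ i : Fin n, (if (σ i).val < r then 1 else 0) := Finset.sum_add_distrib
    _ = (∑ i : Fin n, (if i.val < r then q + 1 else q))
        + ∑ i : Fin n, (if i.val < r then 1 else 0) := by
        rw [Equiv.sum_comp σ (fun j : Fin n => if j.val < r then 1 else 0)]
    _ = (r * (q + 1) + (n - r) * q) + (r * 1 + (n - r) * 0) := by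
        rw [Fin.sum_univ_eq_sum_range (fun x => if x < r then q + 1 else q) n,
          Fin.sum_univ_eq_sum_range (fun x => if x < r then 1 else 0) n,
          LThirdHalf.sum_ite_range n r (q + 1) q (by omega),
          LThirdHalf.sum_ite_range n r 1 0 (by omega)]
    _ = q * n + 2 * r := by
        have e3 : n - r = r + s := by omega
        rw [e3, hn']
        ring
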